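/- arXiv:2211.10540 — 3 statements merged into one kernel-verified Lean document; each statement's English description precedes it below -/
import Mathlib

section
/- Fourier–Motzkin elimination preserves satisfiability: for a finite system of linear inequalities over variables x₁,…,xᵣ partitioned into lower bounds Aⱼ ≤ xᵣ (j = 1..n_A), upper bounds xᵣ ≤ Bⱼ (j = 1..n_B), and inequalities φᵢ not mentioning xᵣ, the system is satisfiable over ℝ if and only if the system {Aᵢ ≤ Bⱼ : 1 ≤ i ≤ n_A, 1 ≤ j ≤ n_B} ∪ {φᵢ} over the remaining variables is satisfiable over ℝ. -/
lemma exists_between_of_pairwise {nA nB : ℕ} (a : Fin nA → ℝ) (b : Fin nB → ℝ)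
    (h : ∀ i j, a i ≤ b j) : ∃ x : ℝ, (∀ i, a i ≤ x) ∧ (∀ j, x ≤ b j) := by
  rcases Nat.eq_zero_or_pos nA with hA | hA
  · rcases Nat.eq_zero_or_pos nB with hB | hB
    · exact ⟨0, fun i => absurd i.2 (by omega), fun j => absurd j.2 (by omega)⟩
    · haveI : Nonempty (Fin nB) := ⟨⟨0, hB⟩⟩
      refine ⟨Finset.univ.inf' Finset.univ_nonempty b,
        fun i => absurd i.2 (by omega), fun j => Finset.inf'_le _ (Finset.mem_univ j)⟩
  · haveI : Nonempty (Fin nA) := ⟨⟨0, hA⟩⟩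
    refine ⟨Finset.univ.sup' Finset.univ_nonempty a,
      fun i => Finset.le_sup' _ (Finset.mem_univ i),
      fun j => Finset.sup'_le _ _ fun i _ => h i j⟩

/-- Fourier–Motzkin elimination preserves satisfiability: a system of linear
inequalities over `x₁,…,x_{r-1}` and `x_r`, consisting of lower bounds
`Aⱼ ≤ x_r`, upper bounds `x_r ≤ Bⱼ` (with `Aⱼ, Bⱼ` affine expressions with
rational coefficients in the remaining variables) and inequalities `φᵢ` not
mentioning `x_r`, is satisfiable over ℝ iff the system
`{Aᵢ ≤ Bⱼ} ∪ {φᵢ}` over the remaining variables is satisfiable over ℝ. -/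
theorem fourier_motzkin_preserves_satisfiability
    (m nA nB nφ : ℕ)
    (Acoef : Fin nA → Fin m → ℚ) (Aconst : Fin nA → ℚ)
    (Bcoef : Fin nB → Fin m → ℚ) (Bconst : Fin nB → ℚ)
    (φcoef : Fin nφ → Fin m → ℚ) (φconst : Fin nφ → ℚ) :
    (∃ (y : Fin m → ℝ) (x : ℝ),
        (∀ j, (∑ i, (Acoef j i : ℝ) * y i) + (Aconst j : ℝ) ≤ x) ∧
        (∀ j, x ≤ (∑ i, (Bcoef j i : ℝ) * y i) + (Bconst j : ℝ)) ∧
        (∀ j, (∑ i, (φcoef j i : ℝ) * y i) ≤ (φconst j : ℝ))) ↔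
    (∃ y : Fin m → ℝ,
        (∀ jA jB,
            (∑ i, (Acoef jA i : ℝ) * y i) + (Aconst jA : ℝ) ≤
            (∑ i, (Bcoef jB i : ℝ) * y i) + (Bconst jB : ℝ)) ∧
        (∀ j, (∑ i, (φcoef j i : ℝ) * y i) ≤ (φconst j : ℝ))) := by
  constructor
  · rintro ⟨y, x, hA, hB, hφ⟩
    exact ⟨y, fun jA jB => (hA jA).trans (hB jB), hφ⟩
  · rintro ⟨y, hAB, hφ⟩
    obtain ⟨x, hx1, hx2⟩ := exists_between_of_pairwise
      (fun jA => (∑ i, (Acoef jA i : ℝ) * y i) + (Aconst jA : ℝ))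
      (fun jB => (∑ i, (Bcoef jB i : ℝ) * y i) + (Bconst jB : ℝ)) hAB
    exact ⟨y, x, hx1, hx2, hφ⟩
end

section
/- No waiting net with injective labeling over alphabet {a, b} and without ε-transitions recognizes the prefix-closed timed language L = Pref({(a,d₁) : 2 ≤ d₁ ≤ 3} ∪ {(b,d₂) : 4 ≤ d₂ ≤ 5}); in the simplified two-transition setting: there is no choice of rational intervals [α_a, β_a], [α_b, β_b] with both transitions continuously enabled from time 0 in free choice such that the set of firable first events equals {(a,d) : 2 ≤ d ≤ 3} ∪ {(b,d) : 4 ≤ d ≤ 5}, because urgency forces an event at time min(β_a, β_b), so at most one interval can end before the other begins. -/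
/-- Under the urgent semantics, if two transitions labeled `a` (= `true`) and
`b` (= `false`) are both fully enabled from time 0, the set of possible first
timed events is
`{(a,d) : α_a ≤ d ≤ min(β_a, β_b)} ∪ {(b,d) : α_b ≤ d ≤ min(β_a, β_b)}`.
There is no choice of rational intervals `[α_a, β_a]`, `[α_b, β_b]` making
this set equal to `{(a,d) : 2 ≤ d ≤ 3} ∪ {(b,d) : 4 ≤ d ≤ 5}`: urgency forces
an event by time `min(β_a, β_b)`, so at most one interval can end before the
other begins. -/
theorem no_waiting_net_for_ta1 :
    ¬ ∃ αa βa αb βb : ℚ,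
      0 ≤ αa ∧ αa ≤ βa ∧ 0 ≤ αb ∧ αb ≤ βb ∧
      ({ p : Bool × ℚ |
          (p.1 = true ∧ αa ≤ p.2 ∧ p.2 ≤ min βa βb) ∨
          (p.1 = false ∧ αb ≤ p.2 ∧ p.2 ≤ min βa βb) } =
       { p : Bool × ℚ |
          (p.1 = true ∧ 2 ≤ p.2 ∧ p.2 ≤ 3) ∨
          (p.1 = false ∧ 4 ≤ p.2 ∧ p.2 ≤ 5) }) := by
  rintro ⟨αa, βa, αb, βb, _, _, _, _, h⟩
  have hmem : ∀ p : Bool × ℚ,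
      ((p.1 = true ∧ αa ≤ p.2 ∧ p.2 ≤ min βa βb) ∨
       (p.1 = false ∧ αb ≤ p.2 ∧ p.2 ≤ min βa βb)) ↔
      ((p.1 = true ∧ 2 ≤ p.2 ∧ p.2 ≤ 3) ∨
       (p.1 = false ∧ 4 ≤ p.2 ∧ p.2 ≤ 5)) := fun p =>
    Set.ext_iff.mp h p
  have h5 := (hmem (false, 5)).mpr (Or.inr ⟨rfl, by norm_num, by norm_num⟩)
  have h2 := (hmem (true, 2)).mpr (Or.inl ⟨rfl, by norm_num, by norm_num⟩)
  -- from h5 : 5 ≤ min βa βb ; from h2 : αa ≤ 2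
  have hmin : (5:ℚ) ≤ min βa βb := by
    rcases h5 with ⟨_, _, hm⟩ | ⟨_, _, hm⟩ <;> simp_all
  have ha2 : αa ≤ 2 := by
    rcases h2 with ⟨_, hm, _⟩ | ⟨hf, _, _⟩ <;> simp_all
  have hM := (hmem (true, min βa βb)).mp
    (Or.inl ⟨rfl, le_trans ha2 (by linarith), le_refl _⟩)
  rcases hM with ⟨_, _, hm⟩ | ⟨hf, _, _⟩
  · have hba : (5:ℚ) ≤ βa := le_trans hmin inf_le_left
    have hbb : (5:ℚ) ≤ βb := le_trans hmin inf_le_right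
    simp at hm
    rcases hm with hm | hm <;> linarith
  · simp at hf
end

section
/- No time Petri net with exactly two transitions t₀ (interval [0,20]) followed by t₁ (interval [α, β], enabled only by the firing of t₀, with clock reset at enabling) recognizes the timed language {(t₀, d₀)(t₁, 20) : 0 ≤ d₀ ≤ 20}: there exist no rationals α ≤ β such that for every d₀ ∈ [0, 20], the set of legal firing dates d₀ + d with d ∈ [α, β] equals {20}. -/
/-- No time Petri net with two transitions `t₀` (interval `[0,20]`) followed
by `t₁` (interval `[α,β]`, whose clock is reset when `t₀` fires at date `d₀`)
recognizes `{(t₀,d₀)(t₁,20) : 0 ≤ d₀ ≤ 20}`: there are no rationals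
`0 ≤ α ≤ β` such that for every `d₀ ∈ [0,20]`, the set of legal firing dates
`{d₀ + d : α ≤ d ≤ β}` of `t₁` equals `{20}`. -/
theorem no_tpn_for_waiting_language :
    ¬ ∃ α β : ℚ, 0 ≤ α ∧ α ≤ β ∧
      ∀ d₀ : ℝ, 0 ≤ d₀ → d₀ ≤ 20 →
        { x : ℝ | ∃ d : ℝ, (α : ℝ) ≤ d ∧ d ≤ (β : ℝ) ∧ x = d₀ + d } =
        {(20 : ℝ)} := by
  rintro ⟨α, β, hα, hαβ, h⟩
  have hαβ' : (α : ℝ) ≤ (β : ℝ) := by exact_mod_cast hαβ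
  have h0 := h 0 le_rfl (by norm_num)
  have h20 := h 20 (by norm_num) le_rfl
  have m0 : ((0 : ℝ) + α) ∈ ({(20 : ℝ)} : Set ℝ) := by
    rw [← h0]; exact ⟨α, le_rfl, hαβ', rfl⟩
  have m20 : ((20 : ℝ) + α) ∈ ({(20 : ℝ)} : Set ℝ) := by
    rw [← h20]; exact ⟨α, le_rfl, hαβ', rfl⟩
  simp only [Set.mem_singleton_iff] at m0 m20
  linarith
end
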